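/- Let Γ be a subgroup of SL(2,ℝ) containing T = [[1,1],[0,1]], and let T_u = [[a₁,b₁],[c,d]] ∈ Γ with c ≠ 0. Then there exists an integer k such that the matrix T^k * T_u = [[a₁+kc, b₁+kd],[c,d]] satisfies (a₁+d)(a₁+kc+d) ≤ 0 and |a₁+kc+d| ≥ 2. -/
import Mathlib

lemma aux_le (c t : ℝ) (hc : c ≠ 0) : ∃ k : ℤ, (k : ℝ) * c ≤ t := by
  rcases lt_or_gt_of_ne hc with h | h
  · refine ⟨⌈t / c⌉, ?_⟩
    have := Int.le_ceil (t / c)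
    calc (⌈t / c⌉ : ℝ) * c ≤ (t / c) * c := by nlinarith
      _ = t := by field_simp
  · refine ⟨⌊t / c⌋, ?_⟩
    have := Int.floor_le (t / c)
    calc (⌊t / c⌋ : ℝ) * c ≤ (t / c) * c := by nlinarith
      _ = t := by field_simp

lemma aux_ge (c t : ℝ) (hc : c ≠ 0) : ∃ k : ℤ, t ≤ (k : ℝ) * c := by
  obtain ⟨k, hk⟩ := aux_le (-c) (-t) (by simpa using hc)
  exact ⟨k, by linarith⟩

theorem stmt_12 (a₁ d c : ℝ) (hc : c ≠ 0) :
    ∃ k : ℤ, (a₁ + d) * (a₁ + k * c + d) ≤ 0 ∧ |a₁ + k * c + d| ≥ 2 := by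
  rcases le_or_gt 0 (a₁ + d) with h | h
  · obtain ⟨k, hk⟩ := aux_le c (-(a₁ + d + 2)) hc
    refine ⟨k, ?_, ?_⟩
    · nlinarith
    · rw [ge_iff_le, le_abs]
      right
      linarith
  · obtain ⟨k, hk⟩ := aux_ge c (2 - (a₁ + d)) hc
    refine ⟨k, ?_, ?_⟩
    · nlinarith
    · rw [ge_iff_le, le_abs]
      left
      linarith
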